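/- Let B₁, …, B_k be real n×n matrices with Σⱼ Bⱼ = Iₙ, and α₁, …, α_k ≥ 0 with Σⱼ αⱼ = 1, such that |Σⱼ Bⱼ xⱼ|² ≤ Σⱼ αⱼ |xⱼ|² for all x₁, …, x_k ∈ ℝⁿ. Then Bⱼ = αⱼ Iₙ for every j = 1, …, k. -/

import Mathlib

open Matrix

lemma quad_nonpos_lin_zero (a b : ℝ) (h : ∀ t : ℝ, a * t ^ 2 + b * t ≤ 0) : b = 0 := by
  by_contra hb
  set c : ℝ := |a| + 1 with hc
  have hcpos : 0 < c := by have := abs_nonneg a; simp [hc]; linarith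
  have h1 := h (b / c)
  have heq : a * (b / c) ^ 2 + b * (b / c) = b ^ 2 / c ^ 2 * (a + c) := by
    field_simp
  rw [heq] at h1
  have hac : 0 < a + c := by have := neg_abs_le a; simp [hc]; linarith
  have hb2 : 0 < b ^ 2 / c ^ 2 := by positivity
  nlinarith

lemma expand_sq (n : ℕ) (v z : Fin n → ℝ) (t : ℝ) :
    ∑ i, (v i + t * z i) ^ 2
      = ∑ i, v i ^ 2 + 2 * t * ∑ i, v i * z i + t ^ 2 * ∑ i, z i ^ 2 := by
  rw [Finset.mul_sum, Finset.mul_sum, ← Finset.sum_add_distrib, ← Finset.sum_add_distrib]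
  exact Finset.sum_congr rfl (fun i _ => by ring)

theorem no_exotic_general (n k : ℕ) (B : Fin k → Matrix (Fin n) (Fin n) ℝ)
    (α : Fin k → ℝ) (hα : ∀ j, 0 ≤ α j) (hαsum : ∑ j, α j = 1)
    (hBsum : ∑ j, B j = (1 : Matrix (Fin n) (Fin n) ℝ))
    (h : ∀ x : Fin k → (Fin n → ℝ),
      ∑ i, ((∑ j, (B j).mulVec (x j)) i) ^ 2 ≤ ∑ j, α j * ∑ i, (x j i) ^ 2) :
    ∀ j, B j = α j • (1 : Matrix (Fin n) (Fin n) ℝ) := by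
  intro j₀
  have hmsum : ∀ u : Fin n → ℝ, ∑ j, (B j).mulVec u = u := by
    intro u; funext i
    rw [Finset.sum_apply]
    have : ∑ j, ((B j).mulVec u) i = ((∑ j, B j).mulVec u) i := by
      simp only [Matrix.mulVec, dotProduct, Finset.sum_apply]
      rw [Finset.sum_comm]
      exact Finset.sum_congr rfl fun l _ => by
        rw [Matrix.sum_apply, Finset.sum_mul]
    rw [this, hBsum, Matrix.one_mulVec]
  -- key bilinear identity
  have main : ∀ u w : Fin n → ℝ,
      ∑ i, u i * ((B j₀).mulVec w) i = α j₀ * ∑ i, u i * w i := by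
    intro u w
    set Bw := (B j₀).mulVec w with hBw
    have key : ∀ t : ℝ,
        (∑ i, Bw i ^ 2 - α j₀ * ∑ i, w i ^ 2) * t ^ 2
          + (2 * ∑ i, u i * Bw i - α j₀ * (2 * ∑ i, u i * w i)) * t ≤ 0 := by
      intro t
      set x : Fin k → (Fin n → ℝ) := fun j => if j = j₀ then u + t • w else u with hxdef
      have hsum : (∑ j, (B j).mulVec (x j)) = fun i => u i + t * Bw i := by
        have step : ∀ j, (B j).mulVec (x j)
            = (B j).mulVec u + (if j = j₀ then t • Bw else 0) := by
          intro j
          by_cases hj : j = j₀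
          · simp only [hxdef, hj, if_pos]
            simp [mulVec_add, Matrix.mulVec_smul, hBw]
          · simp [hxdef, hj]
        rw [Finset.sum_congr rfl (fun j _ => step j), Finset.sum_add_distrib,
          Finset.sum_ite_eq' Finset.univ j₀ (fun _ => t • Bw), hmsum u]
        funext i
        simp [mul_comm]
      have hx := h x
      rw [hsum] at hx
      have hLHS : ∑ i, (u i + t * Bw i) ^ 2
          = ∑ i, u i ^ 2 + 2 * t * ∑ i, u i * Bw i + t ^ 2 * ∑ i, Bw i ^ 2 :=
        expand_sq n u Bw t
      have hRHS : ∑ j, α j * ∑ i, (x j i) ^ 2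
          = ∑ i, u i ^ 2
            + α j₀ * (2 * t * ∑ i, u i * w i + t ^ 2 * ∑ i, w i ^ 2) := by
        have step : ∀ j, α j * ∑ i, (x j i) ^ 2
            = α j * ∑ i, u i ^ 2
              + (if j = j₀ then α j₀ * (2 * t * ∑ i, u i * w i + t ^ 2 * ∑ i, w i ^ 2) else 0) := by
          intro j
          by_cases hj : j = j₀
          · have hxj : ∀ i, x j i = u i + t * w i := by
              intro i; simp [hxdef, hj]
            rw [Finset.sum_congr rfl (fun i _ => by rw [hxj i]), expand_sq n u w t, hj]
            simp; ring
          · simp [hxdef, hj]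
        rw [Finset.sum_congr rfl (fun j _ => step j), Finset.sum_add_distrib,
          Finset.sum_ite_eq' Finset.univ j₀, ← Finset.sum_mul, hαsum]
        simp
      simp only [] at hx
      rw [hLHS, hRHS] at hx
      nlinarith [hx]
    have := quad_nonpos_lin_zero _ _ key
    linarith
  ext i m
  have hthis := main (Pi.single i 1) (Pi.single m 1)
  simp [Matrix.mulVec_single, Pi.single_apply, Finset.mul_sum, mul_ite,
    Finset.sum_ite_eq', Matrix.one_apply] at hthis ⊢
  by_cases him : i = m
  · simp [him] at hthis ⊢; simpa using hthis
  · simp [him, Ne.symm him] at hthis ⊢; simpa using hthis
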